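/- Let n ≥ 2. Among all strictly upper-triangular n×n matrices with entries in {0,1}, the number of matrices A for which the number of directed paths from vertex 1 to vertex n is odd equals the number of matrices for which it is even; both counts equal 2^{n(n−1)/2 − 1}. -/

import Mathlib

/-- Decidability of the monotonicity condition on a Boolean matrix (instance search no longer
finds it through the `Matrix` type synonym). -/
instance instDecidableMonotoneRow (n : ℕ) (A : Matrix (Fin n) (Fin n) Bool) (a : Fin n) :
    DecidablePred fun j : Fin n => A a j = true → a < j :=
  fun _ => inferInstance

open Finset Matrix

namespace Stmt7Aux

lemma auxPowGen {R} [Semiring R] (N E : R) (hEN : E * N = 0) (hNE : N * E = 0)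
    (hEE : E * E = 0) : ∀ k, 2 ≤ k → (N + E) ^ k = N ^ k := by
  intro k hk
  induction k with
  | zero => omega
  | succ k ih =>
    rcases Nat.lt_or_ge k 2 with hk2 | hk2
    · have hk1 : k = 1 := by omega
      subst hk1
      rw [show (1:ℕ)+1 = 2 from rfl, pow_two, pow_two, add_mul, mul_add, mul_add, hEN, hNE, hEE]
      simp
    · rw [pow_succ, pow_succ, ih hk2, mul_add]
      have hNkE : N ^ k * E = 0 := by
        obtain ⟨k', rfl⟩ : ∃ k', k = k' + 1 := ⟨k - 1, by omega⟩
        rw [pow_succ, mul_assoc, hNE, mul_zero]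
      rw [hNkE, add_zero]

variable {n : ℕ}
variable (hn : 2 ≤ n) (a b : Fin n) (ha : (a : ℕ) = 0) (hb : (b : ℕ) = n - 1)

set_option linter.unusedSectionVars false

include hn ha hb in
lemma auxEN (N : Matrix (Fin n) (Fin n) ℕ) (hN : ∀ i j, N i j ≠ 0 → i < j) :
    Matrix.single a b 1 * N = 0 := by
  ext i j
  simp only [Matrix.mul_apply, Matrix.zero_apply, Matrix.single, Matrix.of_apply]
  apply Finset.sum_eq_zero
  intro x _
  by_cases h : a = i ∧ b = x
  · have hx : N x j = 0 := by
      by_contra hc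
      have h1 := hN _ _ hc
      rw [Fin.lt_def, ← h.2, hb] at h1
      have h2 := j.isLt
      omega
    simp [hx]
  · simp [h]

include hn ha hb in
lemma auxNE (N : Matrix (Fin n) (Fin n) ℕ) (hN : ∀ i j, N i j ≠ 0 → i < j) :
    N * Matrix.single a b 1 = 0 := by
  ext i j
  simp only [Matrix.mul_apply, Matrix.zero_apply, Matrix.single, Matrix.of_apply]
  apply Finset.sum_eq_zero
  intro x _
  by_cases h : a = x ∧ b = j
  · have hx : N i x = 0 := by
      by_contra hc
      have h1 := hN _ _ hc
      rw [Fin.lt_def, ← h.1, ha] at h1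
      omega
    simp [hx]
  · simp [h]

include hn ha hb in
lemma auxEE : Matrix.single a b (1:ℕ) * Matrix.single a b 1 = 0 := by
  ext i j
  simp only [Matrix.mul_apply, Matrix.zero_apply, Matrix.single, Matrix.of_apply]
  apply Finset.sum_eq_zero
  intro x _
  by_cases h : a = i ∧ b = x
  · have : ¬ (a = x) := by
      intro hc
      rw [← h.2] at hc
      have := congrArg Fin.val hc
      omega
    simp [this]
  · simp [h]

include hn ha hb in
lemma auxSum (N : Matrix (Fin n) (Fin n) ℕ) (hN : ∀ i j, N i j ≠ 0 → i < j) :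
    ∑ k ∈ Finset.Icc 1 (n-1),
        (((N + Matrix.single a b 1) ^ k : Matrix (Fin n) (Fin n) ℕ)) a b
      = (∑ k ∈ Finset.Icc 1 (n-1), (N ^ k) a b) + 1 := by
  have key : ∀ k ∈ Finset.Icc 1 (n-1),
      (((N + Matrix.single a b 1) ^ k : Matrix (Fin n) (Fin n) ℕ)) a b
        = (N ^ k) a b + if k = 1 then 1 else 0 := by
    intro k hk
    simp only [Finset.mem_Icc] at hk
    rcases eq_or_ne k 1 with rfl | h1
    · simp [Matrix.add_apply, Matrix.single_apply_same]
    · rw [auxPowGen N _ (auxEN hn a b ha hb N hN) (auxNE hn a b ha hb N hN)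
        (auxEE hn a b ha hb) k (by omega), if_neg h1, add_zero]
  rw [Finset.sum_congr rfl key, Finset.sum_add_distrib, Finset.sum_ite_eq']
  rw [if_pos (by simp [Finset.mem_Icc]; omega)]

/-- the ℕ matrix of a Bool matrix -/
def M (A : Matrix (Fin n) (Fin n) Bool) : Matrix (Fin n) (Fin n) ℕ :=
  Matrix.of fun i j => if A i j then (1:ℕ) else 0

/-- path-count sum -/
def S (a b : Fin n) (A : Matrix (Fin n) (Fin n) Bool) : ℕ :=
  ∑ k ∈ Finset.Icc 1 (n-1), ((M A ^ k : Matrix (Fin n) (Fin n) ℕ)) a b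

/-- toggle the (a,b) entry -/
def tog (a b : Fin n) (A : Matrix (Fin n) (Fin n) Bool) : Matrix (Fin n) (Fin n) Bool :=
  Matrix.of fun i j => if i = a ∧ j = b then !(A i j) else A i j

lemma tog_invol (A : Matrix (Fin n) (Fin n) Bool) : tog a b (tog a b A) = A := by
  ext i j
  by_cases h : i = a ∧ j = b <;> simp [tog, h]

include ha hb hn in
lemma tog_mono (A : Matrix (Fin n) (Fin n) Bool) (hA : ∀ i j, A i j = true → i < j) :
    ∀ i j, tog a b A i j = true → i < j := by
  intro i j hij
  by_cases h : i = a ∧ j = b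
  · obtain ⟨rfl, rfl⟩ := h
    rw [Fin.lt_def, ha, hb]; omega
  · exact hA i j (by simpa [tog, h] using hij)

lemma M_mono (A : Matrix (Fin n) (Fin n) Bool) (hA : ∀ i j, A i j = true → i < j) :
    ∀ i j, M A i j ≠ 0 → i < j := by
  intro i j h
  apply hA
  by_contra hc
  simp [M, hc] at h

include ha hb hn in
lemma S_tog_false (A : Matrix (Fin n) (Fin n) Bool) (hA : ∀ i j, A i j = true → i < j)
    (hab : A a b = false) : S a b (tog a b A) = S a b A + 1 := by
  have hM : M (tog a b A) = M A + Matrix.single a b 1 := by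
    ext i j
    by_cases h : i = a ∧ j = b
    · obtain ⟨rfl, rfl⟩ := h
      simp [M, tog, hab, Matrix.add_apply, Matrix.single_apply_same]
    · have hE : Matrix.single a b (1:ℕ) i j = 0 := by
        simp only [Matrix.single, Matrix.of_apply]
        rw [if_neg]
        intro ⟨h1, h2⟩
        exact h ⟨h1.symm, h2.symm⟩
      simp [M, tog, h, Matrix.add_apply, hE]
  rw [S, hM, auxSum hn a b ha hb (M A) (M_mono A hA)]
  rfl

include ha hb hn in
lemma S_tog_parity (A : Matrix (Fin n) (Fin n) Bool) (hA : ∀ i j, A i j = true → i < j) :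
    Odd (S a b (tog a b A)) ↔ Even (S a b A) := by
  rcases Bool.eq_false_or_eq_true (A a b) with hab | hab
  · have hab' : tog a b A a b = false := by simp [tog, hab]
    have := S_tog_false hn a b ha hb (tog a b A) (tog_mono hn a b ha hb A hA) hab'
    rw [tog_invol] at this
    rw [this]
    simp [Nat.even_add_one, Nat.not_odd_iff_even, Nat.not_even_iff_odd]
  · rw [S_tog_false hn a b ha hb A hA hab]
    simp [Nat.odd_add_one, Nat.not_odd_iff_even]

end Stmt7Aux

namespace Stmt7Aux2

lemma card_pairs (n : ℕ) :
    Fintype.card {p : Fin n × Fin n // p.1 < p.2} = n * (n - 1) / 2 := by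
  rw [Fintype.card_congr (Equiv.subtypeProdEquivSigmaSubtype fun i j : Fin n => i < j),
    Fintype.card_sigma]
  have : ∀ i : Fin n, Fintype.card {j : Fin n // i < j} = n - 1 - i := by
    intro i
    rw [Fintype.card_subtype]
    have : ({x | i < x} : Finset (Fin n)) = Finset.Ioi i := Finset.filter_lt_eq_Ioi
    rw [this, Fin.card_Ioi]
  rw [Fintype.sum_congr _ _ this, Fin.sum_univ_eq_sum_range (fun k => n - 1 - k)]
  rw [Finset.sum_range_reflect (fun j => j) n]
  exact Finset.sum_range_id n

lemma card_mono (n : ℕ) :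
    ((Finset.univ : Finset (Matrix (Fin n) (Fin n) Bool)).filter
      (fun A => ∀ i j : Fin n, A i j = true → i < j)).card = 2 ^ (n * (n - 1) / 2) := by
  rw [← Fintype.card_subtype]
  have e : {A : Matrix (Fin n) (Fin n) Bool // ∀ i j : Fin n, A i j = true → i < j} ≃
      ({p : Fin n × Fin n // p.1 < p.2} → Bool) := by
    refine ⟨fun A p => A.1 p.1.1 p.1.2,
      fun f => ⟨Matrix.of fun i j => if h : i < j then f ⟨(i, j), h⟩ else false, ?_⟩, ?_, ?_⟩
    · intro i j hij
      by_contra hc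
      simp [hc] at hij
    · intro A
      ext i j
      by_cases h : i < j
      · simp [h]
      · have : A.1 i j = false := by
          rcases Bool.eq_false_or_eq_true (A.1 i j) with h' | h'
          · exact absurd (A.2 i j h') h
          · exact h'
        simp [h, this]
    · intro f
      funext p
      simp [p.2]
  rw [Fintype.card_congr e, Fintype.card_fun, Fintype.card_bool, card_pairs]

end Stmt7Aux2

namespace Stmt7Aux

variable {n : ℕ} (hn : 2 ≤ n) (a b : Fin n) (ha : (a : ℕ) = 0) (hb : (b : ℕ) = n - 1)

include hn ha hb in
lemma main1 :
    ((Finset.univ : Finset (Matrix (Fin n) (Fin n) Bool)).filter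
        (fun A => (∀ i j : Fin n, A i j = true → i < j) ∧
          Odd (∑ k ∈ Finset.Icc 1 (n - 1),
            ((Matrix.of fun i j : Fin n => if A i j then (1 : ℕ) else 0) ^ k) a b))).card =
      ((Finset.univ : Finset (Matrix (Fin n) (Fin n) Bool)).filter
        (fun A => (∀ i j : Fin n, A i j = true → i < j) ∧
          Even (∑ k ∈ Finset.Icc 1 (n - 1),
            ((Matrix.of fun i j : Fin n => if A i j then (1 : ℕ) else 0) ^ k) a b))).card := by
  apply Finset.card_nbij' (i := tog a b) (j := tog a b)
  · intro A hA
    simp only [Finset.mem_coe, Finset.mem_filter, Finset.mem_univ, true_and] at hA ⊢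
    obtain ⟨h1, h2⟩ := hA
    refine ⟨tog_mono hn a b ha hb A h1, ?_⟩
    have hp := S_tog_parity hn a b ha hb A h1
    have h2' : Odd (S a b A) := h2
    show Even (S a b (tog a b A))
    rw [← Nat.not_odd_iff_even, hp, ← Nat.not_odd_iff_even]
    exact not_not_intro h2'
  · intro A hA
    simp only [Finset.mem_coe, Finset.mem_filter, Finset.mem_univ, true_and] at hA ⊢
    obtain ⟨h1, h2⟩ := hA
    refine ⟨tog_mono hn a b ha hb A h1, ?_⟩
    have h2' : Even (S a b A) := h2
    show Odd (S a b (tog a b A))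
    exact (S_tog_parity hn a b ha hb A h1).mpr h2'
  · intro A _
    exact tog_invol a b A
  · intro A _
    exact tog_invol a b A

lemma evenEqNotOdd :
    ((Finset.univ : Finset (Matrix (Fin n) (Fin n) Bool)).filter
        (fun A => (∀ i j : Fin n, A i j = true → i < j) ∧
          Even (∑ k ∈ Finset.Icc 1 (n - 1),
            ((Matrix.of fun i j : Fin n => if A i j then (1 : ℕ) else 0) ^ k) a b))) =
      ((Finset.univ : Finset (Matrix (Fin n) (Fin n) Bool)).filter
        (fun A => (∀ i j : Fin n, A i j = true → i < j) ∧
          ¬ Odd (∑ k ∈ Finset.Icc 1 (n - 1),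
            ((Matrix.of fun i j : Fin n => if A i j then (1 : ℕ) else 0) ^ k) a b))) := by
  apply Finset.filter_congr
  intro A _
  simp [Nat.not_odd_iff_even]

lemma split :
    ((Finset.univ : Finset (Matrix (Fin n) (Fin n) Bool)).filter
        (fun A => (∀ i j : Fin n, A i j = true → i < j) ∧
          Odd (∑ k ∈ Finset.Icc 1 (n - 1),
            ((Matrix.of fun i j : Fin n => if A i j then (1 : ℕ) else 0) ^ k) a b))).card +
      ((Finset.univ : Finset (Matrix (Fin n) (Fin n) Bool)).filter
        (fun A => (∀ i j : Fin n, A i j = true → i < j) ∧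
          ¬ Odd (∑ k ∈ Finset.Icc 1 (n - 1),
            ((Matrix.of fun i j : Fin n => if A i j then (1 : ℕ) else 0) ^ k) a b))).card =
      2 ^ (n * (n - 1) / 2) := by
  rw [← Stmt7Aux2.card_mono n, ← Finset.filter_filter, ← Finset.filter_filter]
  exact Finset.card_filter_add_card_filter_not _

include hn ha hb in
lemma main2 :
    ((Finset.univ : Finset (Matrix (Fin n) (Fin n) Bool)).filter
        (fun A => (∀ i j : Fin n, A i j = true → i < j) ∧
          Odd (∑ k ∈ Finset.Icc 1 (n - 1),
            ((Matrix.of fun i j : Fin n => if A i j then (1 : ℕ) else 0) ^ k) a b))).card =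
      2 ^ (n * (n - 1) / 2 - 1) := by
  have hN1 : 1 ≤ n * (n - 1) / 2 := by
    have h3 : 2 * 1 ≤ n * (n - 1) := Nat.mul_le_mul hn (by omega)
    omega
  have hpow : 2 ^ (n * (n - 1) / 2) = 2 ^ (n * (n - 1) / 2 - 1) * 2 := by
    rw [← pow_succ]
    congr 1
    omega
  have h1 := main1 hn a b ha hb
  have h2 := congrArg Finset.card (evenEqNotOdd a b)
  have hsplit := split a b
  rw [h1, h2]
  rw [h1, h2, hpow, ← two_mul, mul_comm _ 2] at hsplit
  exact Nat.eq_of_mul_eq_mul_left (by norm_num) hsplit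

end Stmt7Aux

/-- Counting claim in the proof of Theorem 4.10 ('𝔇 is half-randomizing'): among
strictly upper-triangular `n × n` 0/1 matrices (monotone DAGs on vertices `0, …, n-1`,
encoded as Boolean matrices `A` with `A i j = true → i < j`), the number of matrices for
which the number of directed paths from vertex `0` to vertex `n-1`, namely
`∑_{k=1}^{n-1} (A^k)_{0,n-1}` over `ℕ`, is odd equals the number of matrices for which
it is even, and both counts equal `2^(n(n-1)/2 - 1)`. -/
theorem stmt7 (n : ℕ) (hn : 2 ≤ n) :
    ((Finset.univ : Finset (Matrix (Fin n) (Fin n) Bool)).filter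
        (fun A => (∀ i j : Fin n, A i j = true → i < j) ∧
          Odd (∑ k ∈ Finset.Icc 1 (n - 1),
            ((Matrix.of fun i j : Fin n => if A i j then (1 : ℕ) else 0) ^ k)
              (⟨0, by omega⟩ : Fin n) (⟨n - 1, by omega⟩ : Fin n)))).card =
      ((Finset.univ : Finset (Matrix (Fin n) (Fin n) Bool)).filter
        (fun A => (∀ i j : Fin n, A i j = true → i < j) ∧
          Even (∑ k ∈ Finset.Icc 1 (n - 1),
            ((Matrix.of fun i j : Fin n => if A i j then (1 : ℕ) else 0) ^ k)
              (⟨0, by omega⟩ : Fin n) (⟨n - 1, by omega⟩ : Fin n)))).card ∧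
    ((Finset.univ : Finset (Matrix (Fin n) (Fin n) Bool)).filter
        (fun A => (∀ i j : Fin n, A i j = true → i < j) ∧
          Odd (∑ k ∈ Finset.Icc 1 (n - 1),
            ((Matrix.of fun i j : Fin n => if A i j then (1 : ℕ) else 0) ^ k)
              (⟨0, by omega⟩ : Fin n) (⟨n - 1, by omega⟩ : Fin n)))).card =
      2 ^ (n * (n - 1) / 2 - 1) := by
  exact ⟨Stmt7Aux.main1 hn ⟨0, by omega⟩ ⟨n - 1, by omega⟩ rfl rfl,
    Stmt7Aux.main2 hn ⟨0, by omega⟩ ⟨n - 1, by omega⟩ rfl rfl⟩
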